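/- Let μ be a nonzero locally finite measure on ℝ^d∖{0} with the scaling property μ(cB) = c^{−α}μ(B) for all c > 0 (α > 0), and let f : ℝ^d → ℝ be positively homogeneous of degree β > 0 with μ(D_f) = 0 and continuous at 0. Then μ(f^{-1}({1})) = 0. -/

import Mathlib

open MeasureTheory Set Pointwise

/-- If `μ` is a nonzero locally finite measure on `ℝ^d∖{0}` with scaling property
`μ(cB) = c^{−α} μ(B)` (`α > 0`), and `f` is positively homogeneous of degree `β > 0`,
continuous at `0`, with `μ(D_f) = 0`, then `μ(f⁻¹({1})) = 0`. -/
theorem stmt15 (d : ℕ) (α : ℝ) (hα : 0 < α)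
    (μ : Measure (EuclideanSpace ℝ (Fin d))) (hμ0 : μ {0} = 0) (hμne : μ ≠ 0)
    (hloc : ∀ ε : ℝ, 0 < ε → μ {x | ε < ‖x‖} < ⊤)
    (hscale : ∀ c : ℝ, 0 < c → ∀ B : Set (EuclideanSpace ℝ (Fin d)),
      MeasurableSet B → μ (c • B) = ENNReal.ofReal (c ^ (-α)) * μ B)
    (f : EuclideanSpace ℝ (Fin d) → ℝ) (β : ℝ) (hβ : 0 < β)
    (hhom : ∀ c : ℝ, 0 < c → ∀ v, f (c • v) = c ^ β * f v)
    (hcont : ContinuousAt f 0)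
    (hDf : μ {x | ¬ ContinuousAt f x} = 0) :
    μ (f ⁻¹' {1}) = 0 := by
  by_contra hne
  set C := {x : EuclideanSpace ℝ (Fin d) | ContinuousAt f x} with hCdef
  have hCmeas : MeasurableSet C := (IsGδ.setOf_continuousAt f).measurableSet
  -- f 0 = 0
  have hf0 : f 0 = 0 := by
    have h := hhom 2 (by norm_num) 0
    rw [smul_zero] at h
    have h2 : (1 : ℝ) < (2 : ℝ) ^ β := Real.one_lt_rpow_iff_of_pos (by norm_num) |>.2
      (Or.inl ⟨by norm_num, hβ⟩)
    nlinarith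
  -- continuity at 0 gives separation
  obtain ⟨ε, hε, hball⟩ := Metric.continuousAt_iff.mp hcont (1/2) (by norm_num)
  -- continuity points are scaling invariant
  have hfeq : ∀ c : ℝ, 0 < c → f = fun x => c ^ β * f (c⁻¹ • x) := by
    intro c hc
    funext x
    have := hhom c hc (c⁻¹ • x)
    rwa [smul_inv_smul₀ hc.ne'] at this
  have hCsmul : ∀ c : ℝ, 0 < c → ∀ y, ContinuousAt f y → ContinuousAt f (c • y) := by
    intro c hc y hy
    rw [hfeq c hc]
    have h1 : ContinuousAt (fun x : EuclideanSpace ℝ (Fin d) => c⁻¹ • x) (c • y) :=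
      (continuous_const_smul c⁻¹).continuousAt
    have h2 : ContinuousAt f (c⁻¹ • c • y) := by
      rwa [inv_smul_smul₀ hc.ne']
    exact (continuousAt_const.mul (h2.comp h1))
  -- the key sets
  set S : ℝ → Set (EuclideanSpace ℝ (Fin d)) := fun q => f ⁻¹' {q} ∩ C with hSdef
  have hSmeas : ∀ q : ℝ, MeasurableSet (S q) := by
    intro q
    have hcont' : ContinuousOn f C := fun x hx => hx.continuousWithinAt
    obtain ⟨u, hu, huC⟩ := continuousOn_iff'.mp hcont' ({q}ᶜ) isOpen_compl_singleton
    have : S q = uᶜ ∩ C := by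
      ext x
      constructor
      · rintro ⟨hx1, hx2⟩
        refine ⟨fun hxu => ?_, hx2⟩
        have : x ∈ f ⁻¹' {q}ᶜ ∩ C := huC ▸ ⟨hxu, hx2⟩
        exact this.1 hx1
      · rintro ⟨hx1, hx2⟩
        refine ⟨?_, hx2⟩
        by_contra hfx
        have : x ∈ u ∩ C := huC ▸ ⟨hfx, hx2⟩
        exact hx1 this.1
    rw [this]
    exact hu.isClosed_compl.measurableSet.inter hCmeas
  -- scaling of S
  have hsmulS : ∀ c : ℝ, 0 < c → c • S 1 = S (c ^ β) := by
    intro c hc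
    ext x
    rw [Set.mem_smul_set_iff_inv_smul_mem₀ hc.ne']
    have hfx : f x = c ^ β * f (c⁻¹ • x) := by
      have := hhom c hc (c⁻¹ • x)
      rwa [smul_inv_smul₀ hc.ne'] at this
    have hcβ : (0 : ℝ) < c ^ β := Real.rpow_pos_of_pos hc β
    constructor
    · rintro ⟨hx1, hx2⟩
      refine ⟨?_, ?_⟩
      · simp only [Set.mem_preimage, Set.mem_singleton_iff] at hx1 ⊢
        rw [hfx, hx1, mul_one]
      · have := hCsmul c hc _ hx2
        rwa [smul_inv_smul₀ hc.ne'] at this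
    · rintro ⟨hx1, hx2⟩
      refine ⟨?_, hCsmul c⁻¹ (inv_pos.mpr hc) _ hx2⟩
      simp only [Set.mem_preimage, Set.mem_singleton_iff] at hx1 ⊢
      rw [hx1] at hfx
      have h : c ^ β * f (c⁻¹ • x) = c ^ β * 1 := by rw [mul_one]; linarith
      exact mul_left_cancel₀ hcβ.ne' h
  -- measure of S 1 is positive
  have hS1pos : μ (S 1) ≠ 0 := by
    intro h0
    apply hne
    have hsub : f ⁻¹' {1} ⊆ S 1 ∪ {x | ¬ ContinuousAt f x} := by
      intro x hx
      by_cases hc : ContinuousAt f x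
      · exact Or.inl ⟨hx, hc⟩
      · exact Or.inr hc
    have h1 : μ (f ⁻¹' {1}) ≤ μ (S 1 ∪ {x | ¬ ContinuousAt f x}) := measure_mono hsub
    have h2 := le_trans h1 (measure_union_le (μ := μ) (S 1) {x | ¬ ContinuousAt f x})
    rw [h0, hDf, add_zero] at h2
    exact le_antisymm h2 zero_le
  -- choose countably many levels in (1/2, 1)
  set q : ℕ → ℝ := fun n => 1/2 + 1/(4*(n+1)) with hqdef
  have hq_lt : ∀ n, q n < 1 := by
    intro n
    have h1 : (0:ℝ) < 4*((n:ℝ)+1) := by positivity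
    have : 1/(4*((n:ℝ)+1)) ≤ 1/4 := by
      rw [div_le_div_iff₀ h1 (by norm_num)]
      nlinarith [Nat.cast_nonneg (α := ℝ) n]
    simp only [hqdef]; linarith
  have hq_gt : ∀ n, 1/2 < q n := by
    intro n
    have : (0:ℝ) < 1/(4*((n:ℝ)+1)) := by positivity
    simp only [hqdef]; linarith
  have hq_pos : ∀ n, (0:ℝ) < q n := by
    intro n
    simp only [hqdef]
    positivity
  have hq_inj : Function.Injective q := by
    intro n m hnm
    simp only [hqdef] at hnm
    have h1 : (0:ℝ) < 4*((n:ℝ)+1) := by positivity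
    have h2 : (0:ℝ) < 4*((m:ℝ)+1) := by positivity
    have : 4*((n:ℝ)+1) = 4*((m:ℝ)+1) := by
      field_simp at hnm
      nlinarith
    have : (n:ℝ) = m := by linarith
    exact_mod_cast this
  -- the scale factors
  set c : ℕ → ℝ := fun n => (q n) ^ (β⁻¹) with hcdef
  have hc_pos : ∀ n, 0 < c n := fun n => Real.rpow_pos_of_pos (hq_pos n) _
  have hc_pow : ∀ n, (c n) ^ β = q n := by
    intro n
    rw [hcdef]
    rw [← Real.rpow_mul (hq_pos n).le, inv_mul_cancel₀ hβ.ne', Real.rpow_one]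
  have hc_le_one : ∀ n, c n ≤ 1 := by
    intro n
    rw [hcdef]
    exact Real.rpow_le_one (hq_pos n).le (hq_lt n).le (by positivity)
  -- μ (S (q n)) ≥ μ (S 1)
  have hSm : ∀ n, μ (S 1) ≤ μ (S (q n)) := by
    intro n
    have h1 : μ (S (q n)) = ENNReal.ofReal ((c n) ^ (-α)) * μ (S 1) := by
      rw [← hc_pow n, ← hsmulS (c n) (hc_pos n)]
      exact hscale (c n) (hc_pos n) (S 1) (hSmeas 1)
    rw [h1]
    have h2 : (1:ℝ) ≤ (c n) ^ (-α) :=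
      Real.one_le_rpow_of_pos_of_le_one_of_nonpos (hc_pos n) (hc_le_one n) (by linarith)
    calc μ (S 1) = 1 * μ (S 1) := (one_mul _).symm
    _ ≤ ENNReal.ofReal ((c n) ^ (-α)) * μ (S 1) := by
        gcongr
        rw [← ENNReal.ofReal_one]
        exact ENNReal.ofReal_le_ofReal h2
  -- disjointness
  have hdisj : Pairwise (Function.onFun Disjoint fun n => S (q n)) := by
    intro n m hnm
    refine Set.disjoint_left.mpr ?_
    rintro x ⟨hx1, -⟩ ⟨hx2, -⟩
    simp only [Set.mem_preimage, Set.mem_singleton_iff] at hx1 hx2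
    exact hnm (hq_inj (hx1 ▸ hx2))
  -- separation from origin
  have hsep : ∀ n, S (q n) ⊆ {x | ε/2 < ‖x‖} := by
    intro n x hx
    simp only [Set.mem_setOf_eq]
    by_contra hle
    push_neg at hle
    have hdx : dist x 0 < ε := by
      rw [dist_zero_right]
      linarith
    have := hball hdx
    rw [hf0, dist_zero_right, Real.norm_eq_abs, abs_lt] at this
    have hfx : f x = q n := hx.1
    have h2 := hq_gt n
    rw [hfx] at this
    linarith [this.2]
  -- contradiction with local finiteness
  have hles : μ (⋃ n, S (q n)) ≤ μ {x | ε/2 < ‖x‖} :=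
    measure_mono (Set.iUnion_subset hsep)
  rw [measure_iUnion hdisj (fun n => hSmeas (q n))] at hles
  have htop : (⊤ : ENNReal) ≤ ∑' n, μ (S (q n)) := by
    calc (⊤ : ENNReal) = ∑' _ : ℕ, μ (S 1) := (ENNReal.tsum_const_eq_top_of_ne_zero hS1pos).symm
    _ ≤ ∑' n, μ (S (q n)) := ENNReal.tsum_le_tsum hSm
  have := lt_of_le_of_lt (le_trans htop hles) (hloc (ε/2) (by linarith))
  exact absurd this (lt_irrefl _)
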